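/- For any two convex bodies K, L in R^n, max_{x0 ∈ R^n} |K ∩ (x0 - L)| · |K + L| ≤ binom(2n, n) |K| |L|. -/

import Mathlib

open MeasureTheory Set Pointwise intervalIntegral
open scoped ENNReal


lemma beta_nat (b : ℕ) : ∀ a : ℕ, ∫ x in (0:ℝ)..1, x ^ a * (1 - x) ^ b
    = (a.factorial * b.factorial : ℝ) / (a + b + 1).factorial := by
  induction b with
  | zero =>
    intro a
    simp only [pow_zero, mul_one, integral_pow]
    rw [show a + 0 + 1 = a + 1 from rfl, Nat.factorial_succ]
    have ha : (a:ℝ) + 1 ≠ 0 := by positivity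
    have hfa : (a.factorial : ℝ) ≠ 0 := by positivity
    rw [one_pow, zero_pow (by omega), sub_zero]
    push_cast
    field_simp
    simp
  | succ b ih =>
    intro a
    have hu : ∀ x ∈ uIcc (0:ℝ) 1, HasDerivAt (fun x : ℝ => (1 - x) ^ (b+1))
        (-((b+1) * (1 - x) ^ b)) x := by
      intro x _
      have h1 : HasDerivAt (fun x : ℝ => 1 - x) (-1) x := by
        simpa using (hasDerivAt_id x).const_sub 1
      have := h1.fun_pow (b+1)
      simpa [mul_comm, mul_assoc, mul_left_comm] using this
    have hv : ∀ x ∈ uIcc (0:ℝ) 1, HasDerivAt (fun x : ℝ => x ^ (a+1) / (a+1))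
        (x ^ a) x := by
      intro x _
      have := (hasDerivAt_pow (a+1) x).div_const ((a:ℝ)+1)
      have ha : ((a:ℝ)+1) ≠ 0 := by positivity
      simpa [Nat.add_sub_cancel, mul_comm, mul_div_assoc, mul_div_cancel_left₀, ha]
        using this
    have hInt1 : IntervalIntegrable (fun x : ℝ => -((b+1) * (1 - x) ^ b)) volume 0 1 := by
      apply Continuous.intervalIntegrable; continuity
    have hInt2 : IntervalIntegrable (fun x : ℝ => x ^ a) volume 0 1 := by
      apply Continuous.intervalIntegrable; continuity
    have parts := integral_mul_deriv_eq_deriv_mul hu hv hInt1 hInt2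
    have lhs_eq : ∫ x in (0:ℝ)..1, (1 - x) ^ (b+1) * x ^ a
        = ∫ x in (0:ℝ)..1, x ^ a * (1 - x) ^ (b+1) := by
      congr 1; ext x; ring
    rw [lhs_eq] at parts
    rw [parts]
    have : (fun x : ℝ => -((b+1) * (1 - x) ^ b) * (x ^ (a+1) / (a+1)))
        = fun x : ℝ => (-(b+1) / (a+1)) * (x ^ (a+1) * (1 - x) ^ b) := by
      ext x; ring
    rw [this, intervalIntegral.integral_const_mul, ih (a+1)]
    have ha : ((a:ℝ)+1) ≠ 0 := by positivity
    have h2 : ((a + 1 + b + 1).factorial : ℝ) ≠ 0 := by positivity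
    have h3 : ((a + (b+1) + 1).factorial : ℝ) ≠ 0 := by positivity
    have hkey : (a + (b+1) + 1) = (a + 1 + b + 1) := by omega
    rw [hkey]
    rw [Nat.factorial_succ a, Nat.factorial_succ b]
    have hfa : (a.factorial : ℝ) ≠ 0 := by positivity
    have hfb : (b.factorial : ℝ) ≠ 0 := by positivity
    have hb1 : ((b:ℝ)+1) ≠ 0 := by positivity
    rw [show ((a:ℕ)+1+b+1) = (a+b+1)+1 from by omega, Nat.factorial_succ]
    have hab : (((a+b+1).factorial : ℝ)) ≠ 0 := by positivity
    push_cast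
    field_simp
    ring

lemma shell_integral (m : ℕ) {g : ℝ} (hg0 : 0 ≤ g) (hg1 : g ≤ 1) :
    ∫⁻ s in Ioc g 1, ENNReal.ofReal ((m+1) * (1-s)^m)
      = ENNReal.ofReal ((1-g)^(m+1)) := by
  have hcont : Continuous fun s : ℝ => (m+1 : ℝ) * (1-s)^m := by continuity
  rw [← ofReal_integral_eq_lintegral_ofReal (hcont.integrableOn_Ioc)]
  · congr 1
    rw [← intervalIntegral.integral_of_le hg1]
    have hder : ∀ x ∈ uIcc g 1, HasDerivAt (fun s : ℝ => -(1-s)^(m+1))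
        ((m+1 : ℝ) * (1-x)^m) x := by
      intro x _
      have h1 : HasDerivAt (fun x : ℝ => 1 - x) (-1) x := by
        simpa using (hasDerivAt_id x).const_sub 1
      have := (h1.fun_pow (m+1)).fun_neg
      simpa [mul_comm, mul_assoc, mul_left_comm] using this
    rw [intervalIntegral.integral_eq_sub_of_hasDerivAt hder
      (hcont.intervalIntegrable _ _)]
    simp
  · filter_upwards [ae_restrict_mem measurableSet_Ioc] with s hs
    have : (0:ℝ) ≤ 1 - s := by linarith [hs.2]
    positivity

lemma beta_lintegral (m : ℕ) :
    ∫⁻ s in Ioc (0:ℝ) 1, ENNReal.ofReal ((m+1) * (1-s)^m * s^(m+1))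
      = ENNReal.ofReal (((m+1).factorial * (m+1).factorial : ℝ) / (2*(m+1)).factorial) := by
  have hcont : Continuous fun s : ℝ => (m+1 : ℝ) * (1-s)^m * s^(m+1) := by continuity
  rw [← ofReal_integral_eq_lintegral_ofReal (hcont.integrableOn_Ioc)]
  · congr 1
    rw [← intervalIntegral.integral_of_le (zero_le_one)]
    have : (fun s : ℝ => (m+1 : ℝ) * (1-s)^m * s^(m+1))
        = fun s : ℝ => (m+1 : ℝ) * (s^(m+1) * (1-s)^m) := by ext s; ring
    rw [this, intervalIntegral.integral_const_mul, beta_nat m (m+1),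
      show (m+1) + m + 1 = (m + (m+1)) + 1 from by omega,
      show 2*(m+1) = (m + (m+1)) + 1 from by omega,
      Nat.factorial_succ (m + (m+1)), Nat.factorial_succ m]
    have h1 : ((m + (m+1)).factorial : ℝ) ≠ 0 := by positivity
    have h2 : ((m:ℝ) + (m+1) + 1) ≠ 0 := by positivity
    have h3 : ((m:ℝ) + 1) ≠ 0 := by positivity
    push_cast
    field_simp
  · filter_upwards [ae_restrict_mem measurableSet_Ioc] with s hs
    have h1 : (0:ℝ) ≤ 1 - s := by linarith [hs.2]
    have h2 : (0:ℝ) ≤ s := le_of_lt hs.1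
    positivity


variable {n : ℕ}

lemma mem_single_sub {L : Set (EuclideanSpace ℝ (Fin n))} {x y : EuclideanSpace ℝ (Fin n)} :
    y ∈ ({x} : Set _) - L ↔ x - y ∈ L := by
  constructor
  · rintro ⟨a, ha, b, hb, rfl⟩
    simp only [mem_singleton_iff] at ha
    subst ha; simpa using hb
  · intro h
    exact ⟨x, rfl, x - y, h, sub_sub_cancel x y⟩

lemma fubini_sections {K L : Set (EuclideanSpace ℝ (Fin n))}
    (hK : MeasurableSet K) (hL : MeasurableSet L) :
    ∫⁻ x, volume (K ∩ ({x} - L)) = volume K * volume L := by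
  have hset : ∀ x : EuclideanSpace ℝ (Fin n),
      K ∩ ({x} - L) = K ∩ ((fun y => x - y) ⁻¹' L) := by
    intro x; ext y
    simp only [mem_inter_iff, mem_preimage, mem_single_sub]
  have hind : ∀ x y : EuclideanSpace ℝ (Fin n),
      (K ∩ ((fun y => x - y) ⁻¹' L)).indicator (1 : EuclideanSpace ℝ (Fin n) → ℝ≥0∞) y
        = K.indicator 1 y * L.indicator 1 (x - y) := by
    intro x y
    by_cases hy : y ∈ K <;> by_cases hxy : x - y ∈ L <;>
      simp [Set.indicator_apply, hy, hxy]
  have hmeas : ∀ x : EuclideanSpace ℝ (Fin n),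
      MeasurableSet (K ∩ ((fun y => x - y) ⁻¹' L)) := by
    intro x
    exact hK.inter (hL.preimage ((measurable_const.sub measurable_id)))
  calc ∫⁻ x, volume (K ∩ ({x} - L))
      = ∫⁻ x, ∫⁻ y, K.indicator 1 y * L.indicator 1 (x - y) := by
        refine lintegral_congr fun x => ?_
        rw [hset x, ← lintegral_indicator_one (hmeas x)]
        exact lintegral_congr fun y => hind x y
    _ = ∫⁻ y, ∫⁻ x, K.indicator 1 y * L.indicator 1 (x - y) := by
        apply lintegral_lintegral_swap
        apply Measurable.aemeasurable
        have h1 : Measurable fun p : EuclideanSpace ℝ (Fin n) × EuclideanSpace ℝ (Fin n) =>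
            K.indicator (1 : EuclideanSpace ℝ (Fin n) → ℝ≥0∞) p.2 := (measurable_one.indicator hK).comp measurable_snd
        have h2 : Measurable fun p : EuclideanSpace ℝ (Fin n) × EuclideanSpace ℝ (Fin n) =>
            L.indicator (1 : EuclideanSpace ℝ (Fin n) → ℝ≥0∞) (p.1 - p.2) :=
          (measurable_one.indicator hL).comp (measurable_fst.sub measurable_snd)
        exact h1.mul h2
    _ = ∫⁻ y, K.indicator 1 y * volume L := by
        refine lintegral_congr fun y => ?_
        rw [lintegral_const_mul' _ _ (by
          by_cases hy : y ∈ K <;> simp [Set.indicator_apply, hy])]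
        congr 1
        calc ∫⁻ x, L.indicator 1 (x - y) = ∫⁻ x, L.indicator 1 x := by
              simpa [sub_eq_add_neg] using
                lintegral_add_right_eq_self (fun x => L.indicator (1 : EuclideanSpace ℝ (Fin n) → ℝ≥0∞) x) (-y)
          _ = volume L := lintegral_indicator_one hL
    _ = volume K * volume L := by
        rw [lintegral_mul_const _ (measurable_one.indicator hK), lintegral_indicator_one hK]


lemma section_scale {K L : Set (EuclideanSpace ℝ (Fin n))}
    (hKconv : Convex ℝ K) (hLconv : Convex ℝ L)
    {x₀ y b : EuclideanSpace ℝ (Fin n)} {s : ℝ} (hs0 : 0 ≤ s) (hs1 : s ≤ 1)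
    (hb : b ∈ K ∩ ({y} - L)) :
    ENNReal.ofReal ((1-s)^n) * volume (K ∩ ({x₀} - L))
      ≤ volume (K ∩ ({x₀ + s • (y - x₀)} - L)) := by
  set C := K ∩ ({x₀} - L) with hC
  have hbK : b ∈ K := hb.1
  have hbL : y - b ∈ L := mem_single_sub.1 hb.2
  have himg : (fun a => s • b + (1-s) • a) '' C ⊆ K ∩ ({x₀ + s • (y - x₀)} - L) := by
    rintro _ ⟨a, ⟨haK, haL⟩, rfl⟩
    have haL' : x₀ - a ∈ L := mem_single_sub.1 haL
    constructor
    · have := hKconv haK hbK (by linarith : (0:ℝ) ≤ 1 - s) hs0 (by ring)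
      simpa [add_comm] using this
    · rw [mem_single_sub]
      have hmem : (1-s) • (x₀ - a) + s • (y - b) ∈ L :=
        hLconv haL' hbL (by linarith) hs0 (by ring)
      have : x₀ + s • (y - x₀) - (s • b + (1-s) • a)
          = (1-s) • (x₀ - a) + s • (y - b) := by module
      rw [this]; exact hmem
  calc ENNReal.ofReal ((1-s)^n) * volume C
      = volume ((1-s) • C) := by
        rw [Measure.addHaar_smul_of_nonneg volume (by linarith : (0:ℝ) ≤ 1-s) C,
          finrank_euclideanSpace_fin]
    _ = volume ((s • b) +ᵥ ((1-s) • C)) := (measure_vadd volume _ _).symm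
    _ = volume ((fun a => s • b + (1-s) • a) '' C) := by
        congr 1
        ext z
        simp only [Set.mem_vadd_set, Set.mem_smul_set, Set.mem_image]
        constructor
        · rintro ⟨w, ⟨a, ha, rfl⟩, rfl⟩
          exact ⟨a, ha, by simp [vadd_eq_add]⟩
        · rintro ⟨a, ha, rfl⟩
          exact ⟨(1-s) • a, ⟨a, ha, rfl⟩, by simp [vadd_eq_add]⟩
    _ ≤ volume (K ∩ ({x₀ + s • (y - x₀)} - L)) := measure_mono himg



lemma smul_set_mono_scale {A : Set (EuclideanSpace ℝ (Fin n))} (hA0 : (0:EuclideanSpace ℝ (Fin n)) ∈ A)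
    (hAconv : Convex ℝ A) {t s : ℝ} (ht : 0 < t) (hts : t ≤ s) : t • A ⊆ s • A := by
  have hs : 0 < s := lt_of_lt_of_le ht hts
  rintro x ⟨a, ha, rfl⟩
  refine ⟨(t/s) • a, ?_, ?_⟩
  · have := hAconv ha hA0 (by positivity : (0:ℝ) ≤ t/s)
      (by
        have : t/s ≤ 1 := (div_le_one hs).2 hts
        linarith : (0:ℝ) ≤ 1 - t/s) (by ring)
    simpa using this
  · show s • ((t/s) • a) = t • a
    rw [smul_smul, mul_div_cancel₀ _ (ne_of_gt hs)]

lemma pointwise_bound (m : ℕ) {A : Set (EuclideanSpace ℝ (Fin n))}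
    (hA0 : (0:EuclideanSpace ℝ (Fin n)) ∈ A) (hAconv : Convex ℝ A)
    (F : EuclideanSpace ℝ (Fin n) → ℝ≥0∞) (M : ℝ≥0∞) (hM : M ≠ ⊤)
    (hF : ∀ s : ℝ, s ∈ Ioc (0:ℝ) 1 → ∀ u ∈ s • A,
      ENNReal.ofReal ((1-s)^(m+1)) * M ≤ F u)
    (u : EuclideanSpace ℝ (Fin n)) :
    M * ∫⁻ s in Ioc (0:ℝ) 1,
        ENNReal.ofReal ((m+1) * (1-s)^m) * (s • A).indicator 1 u ≤ F u := by
  set w : ℝ → ℝ≥0∞ := fun s => ENNReal.ofReal ((m+1) * (1-s)^m) with hw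
  set T : Set ℝ := {s | s ∈ Ioc (0:ℝ) 1 ∧ u ∈ s • A} with hT
  rcases T.eq_empty_or_nonempty with hTe | hTne
  · have h0 : ∀ᵐ s ∂(volume.restrict (Ioc (0:ℝ) 1)),
        w s * (s • A).indicator 1 u = 0 := by
      filter_upwards [ae_restrict_mem measurableSet_Ioc] with s hs
      have hu : u ∉ s • A := fun hu =>
        (Set.eq_empty_iff_forall_notMem.1 hTe s ⟨hs, hu⟩).elim
      simp [Set.indicator_of_notMem hu]
    rw [lintegral_congr_ae h0, lintegral_zero, mul_zero]
    exact zero_le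
  · have hbdd : BddBelow T := ⟨0, fun x hx => le_of_lt hx.1.1⟩
    set g := sInf T with hg
    obtain ⟨s₁, hs₁⟩ := hTne
    have hg0 : 0 ≤ g := le_csInf ⟨s₁, hs₁⟩ (fun x hx => le_of_lt hx.1.1)
    have hg1 : g ≤ 1 := le_trans (csInf_le hbdd hs₁) hs₁.1.2
    have hup : ∀ s : ℝ, g < s → s ≤ 1 → u ∈ s • A := by
      intro s hgs hs1'
      obtain ⟨t, htT, hts⟩ := exists_lt_of_csInf_lt ⟨s₁, hs₁⟩ hgs
      exact smul_set_mono_scale hA0 hAconv htT.1.1 (le_of_lt hts) htT.2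
    -- Step 1 : the inner integral is at most (1-g)^(m+1)
    have step1 : ∫⁻ s in Ioc (0:ℝ) 1, w s * (s • A).indicator 1 u
        ≤ ENNReal.ofReal ((1-g)^(m+1)) := by
      have hptw : ∀ᵐ s ∂(volume.restrict (Ioc (0:ℝ) 1)),
          w s * (s • A).indicator 1 u ≤ (Icc g 1).indicator w s := by
        filter_upwards [ae_restrict_mem measurableSet_Ioc] with s hs
        by_cases hu : u ∈ s • A
        · have hsT : s ∈ T := ⟨hs, hu⟩
          have : s ∈ Icc g 1 := ⟨csInf_le hbdd hsT, hs.2⟩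
          simp [Set.indicator_of_mem, this, hu]
        · simp [Set.indicator_of_notMem hu]
      calc ∫⁻ s in Ioc (0:ℝ) 1, w s * (s • A).indicator 1 u
          ≤ ∫⁻ s in Ioc (0:ℝ) 1, (Icc g 1).indicator w s := lintegral_mono_ae hptw
        _ = ∫⁻ s in Icc g 1 ∩ Ioc (0:ℝ) 1, w s := by
            rw [lintegral_indicator measurableSet_Icc, Measure.restrict_restrict measurableSet_Icc]
        _ ≤ ∫⁻ s in Icc g 1, w s := lintegral_mono' (Measure.restrict_mono inter_subset_left le_rfl) (le_refl _)
        _ = ∫⁻ s in Ioc g 1, w s := by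
            rw [← MeasureTheory.restrict_Ioc_eq_restrict_Icc]
        _ = ENNReal.ofReal ((1-g)^(m+1)) := shell_integral m hg0 hg1
    -- Step 2 : F u ≥ (1-g)^(m+1) * M
    have step2 : ENNReal.ofReal ((1-g)^(m+1)) * M ≤ F u := by
      rcases eq_or_lt_of_le hg1 with hgeq | hglt
      · simp [← hgeq]

      · set sq : ℕ → ℝ := fun k => g + (1-g) * (1/(k+1)) with hsq
        have hsqmem : ∀ k : ℕ, sq k ∈ Ioc (0:ℝ) 1 ∧ g < sq k := by
          intro k
          have h1 : (0:ℝ) < 1/(k+1:ℝ) := by positivity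
          have h2 : (1:ℝ)/(k+1) ≤ 1 := by
            rw [div_le_one (by positivity)]
            simp
          have hg' : (0:ℝ) < 1 - g := by linarith
          have hlt : g < sq k := by
            simp only [hsq]
            nlinarith
          refine ⟨⟨lt_of_le_of_lt hg0 hlt, ?_⟩, hlt⟩
          simp only [hsq]
          nlinarith
        have hbound : ∀ k : ℕ, ENNReal.ofReal ((1 - sq k)^(m+1)) * M ≤ F u := by
          intro k
          exact hF (sq k) (hsqmem k).1 u (hup (sq k) (hsqmem k).2 (hsqmem k).1.2)
        have htend : Filter.Tendsto (fun k : ℕ => ENNReal.ofReal ((1 - sq k)^(m+1)) * M)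
            Filter.atTop (nhds (ENNReal.ofReal ((1-g)^(m+1)) * M)) := by
          have h1 : Filter.Tendsto sq Filter.atTop (nhds g) := by
            have h2 : Filter.Tendsto (fun k : ℕ => (1-g) * (1/(k+1:ℝ))) Filter.atTop (nhds 0) := by
              have := tendsto_one_div_add_atTop_nhds_zero_nat (𝕜 := ℝ)
              simpa using this.const_mul (1-g)
            rw [hsq]
            simpa using h2.const_add g
          have h3 : Filter.Tendsto (fun k : ℕ => ENNReal.ofReal ((1 - sq k)^(m+1)))
              Filter.atTop (nhds (ENNReal.ofReal ((1-g)^(m+1)))) := by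
            apply (ENNReal.continuous_ofReal.tendsto _).comp
            exact ((continuous_const.sub continuous_id).pow (m+1)).continuousAt.tendsto.comp h1
          exact ENNReal.Tendsto.mul_const h3 (Or.inr hM)
        exact le_of_tendsto' htend hbound
    calc M * ∫⁻ s in Ioc (0:ℝ) 1, w s * (s • A).indicator 1 u
        ≤ M * ENNReal.ofReal ((1-g)^(m+1)) := mul_le_mul_right step1 M
      _ = ENNReal.ofReal ((1-g)^(m+1)) * M := mul_comm _ _
      _ ≤ F u := step2

lemma avg_integral (m : ℕ) {A : Set (EuclideanSpace ℝ (Fin (m+1)))}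
    (hAc : IsCompact A) (hAconv : Convex ℝ A) (hA0 : (0:EuclideanSpace ℝ (Fin (m+1))) ∈ A) :
    ∫⁻ u in A, ∫⁻ s in Ioc (0:ℝ) 1,
        ENNReal.ofReal ((m+1) * (1-s)^m) * (s • A).indicator 1 u
      = ENNReal.ofReal (((m+1).factorial * (m+1).factorial : ℝ) / (2*(m+1)).factorial)
        * volume A := by
  have hAm : MeasurableSet A := hAc.isClosed.measurableSet
  have hsA_meas : ∀ s : ℝ, s ∈ Ioc (0:ℝ) 1 → MeasurableSet (s • A) := by
    intro s _
    exact (hAc.smul s).isClosed.measurableSet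
  have hsub : ∀ s : ℝ, s ∈ Ioc (0:ℝ) 1 → s • A ⊆ A := by
    intro s hs
    have := smul_set_mono_scale hA0 hAconv hs.1 hs.2
    simpa using this
  -- the jointly measurable model
  set Q : Set (EuclideanSpace ℝ (Fin (m+1)) × ℝ) :=
    {p | 0 < p.2 ∧ p.2⁻¹ • p.1 ∈ A} with hQdef
  have hQ : MeasurableSet Q := by
    have h1 : MeasurableSet {p : EuclideanSpace ℝ (Fin (m+1)) × ℝ | 0 < p.2} :=
      measurable_snd measurableSet_Ioi
    have h2 : Measurable fun p : EuclideanSpace ℝ (Fin (m+1)) × ℝ => p.2⁻¹ • p.1 :=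
      measurable_snd.inv.smul measurable_fst
    exact h1.inter (h2 hAm)
  have hswap : ∫⁻ u in A, ∫⁻ s in Ioc (0:ℝ) 1,
      ENNReal.ofReal ((m+1) * (1-s)^m) * (s • A).indicator 1 u
      = ∫⁻ s in Ioc (0:ℝ) 1, ∫⁻ u in A,
        ENNReal.ofReal ((m+1) * (1-s)^m) * (s • A).indicator 1 u := by
    apply lintegral_lintegral_swap
    refine ⟨fun p => ENNReal.ofReal ((m+1) * (1-p.2)^m) * Q.indicator 1 p, ?_, ?_⟩
    · apply Measurable.mul
      · apply ENNReal.measurable_ofReal.comp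
        have : Continuous fun s : ℝ => ((m:ℝ)+1) * (1-s)^m := by continuity
        exact this.measurable.comp measurable_snd
      · exact measurable_one.indicator hQ
    · rw [Measure.prod_restrict]
      filter_upwards [ae_restrict_mem (hAm.prod measurableSet_Ioc)] with p hp
      rcases hp with ⟨hpu, hps⟩
      have hs0 : (0:ℝ) < p.2 := hps.1
      have : p.1 ∈ p.2 • A ↔ p ∈ Q := by
        rw [mem_smul_set_iff_inv_smul_mem₀ (ne_of_gt hs0)]
        simp [hQdef, hs0]
      simp only [Function.uncurry]
      by_cases hmem : p.1 ∈ p.2 • A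
      · rw [Set.indicator_of_mem hmem, Set.indicator_of_mem (this.1 hmem)]
        rfl
      · rw [Set.indicator_of_notMem hmem, Set.indicator_of_notMem (fun h => hmem (this.2 h))]
  rw [hswap]
  have hvolA : volume A ≠ ⊤ := hAc.measure_lt_top.ne
  have hinner : ∀ᵐ s ∂(volume.restrict (Ioc (0:ℝ) 1)),
      (∫⁻ u in A, ENNReal.ofReal ((m+1) * (1-s)^m) * (s • A).indicator 1 u)
        = ENNReal.ofReal ((m+1) * (1-s)^m * s^(m+1)) * volume A := by
    filter_upwards [ae_restrict_mem measurableSet_Ioc] with s hs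
    rw [lintegral_const_mul' _ _ ENNReal.ofReal_ne_top]
    rw [lintegral_indicator_one (hsA_meas s hs), Measure.restrict_apply (hsA_meas s hs),
      inter_eq_self_of_subset_left (hsub s hs),
      Measure.addHaar_smul_of_nonneg volume (le_of_lt hs.1) A, finrank_euclideanSpace_fin]
    have h1 : (0:ℝ) ≤ (m+1) * (1-s)^m := by
      have : (0:ℝ) ≤ 1 - s := by linarith [hs.2]
      positivity
    rw [← mul_assoc, ← ENNReal.ofReal_mul h1]
  rw [lintegral_congr_ae hinner, lintegral_mul_const' _ _ hvolA, beta_lintegral m]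


theorem rogers_shephard_two_bodies (n : ℕ) (hn : 0 < n)
    (K L : Set (EuclideanSpace ℝ (Fin n)))
    (hKc : IsCompact K) (hKconv : Convex ℝ K) (hKint : (interior K).Nonempty)
    (hLc : IsCompact L) (hLconv : Convex ℝ L) (hLint : (interior L).Nonempty) :
    (⨆ x₀ : EuclideanSpace ℝ (Fin n), volume (K ∩ ({x₀} - L))) * volume (K + L) ≤
      (Nat.choose (2 * n) n : ℝ≥0∞) * (volume K * volume L) := by
  obtain ⟨m, rfl⟩ : ∃ m, n = m + 1 := ⟨n - 1, (Nat.succ_pred_eq_of_pos hn).symm⟩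
  have hKm : MeasurableSet K := hKc.isClosed.measurableSet
  have hLm : MeasurableSet L := hLc.isClosed.measurableSet
  have hfub := fubini_sections hKm hLm
  rw [ENNReal.iSup_mul]
  refine iSup_le fun x₀ => ?_
  set M := volume (K ∩ ({x₀} - L)) with hMdef
  by_cases hM0 : M = 0
  · rw [hM0, zero_mul]; exact zero_le
  obtain ⟨a₀, ha₀⟩ := nonempty_of_measure_ne_zero hM0
  have hMtop : M ≠ ⊤ :=
    ((measure_mono inter_subset_left).trans_lt hKc.measure_lt_top).ne
  have hx₀ : x₀ ∈ K + L := by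
    obtain ⟨haK, haL⟩ := ha₀
    exact ⟨a₀, haK, x₀ - a₀, mem_single_sub.1 haL, by module⟩
  set S := K + L with hSdef
  have hSc : IsCompact S := hKc.add hLc
  have hSconv : Convex ℝ S := hKconv.add hLconv
  set A : Set (EuclideanSpace ℝ (Fin (m+1))) := (-x₀) +ᵥ S with hAdef
  have hAimg : A = (fun y => (-x₀) +ᵥ y) '' S := by
    rw [hAdef, ← Set.image_vadd]
  have hAc : IsCompact A := by
    rw [hAimg]; exact hSc.image (by continuity)
  have hAconv : Convex ℝ A := hSconv.vadd (-x₀)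
  have hA0 : (0 : EuclideanSpace ℝ (Fin (m+1))) ∈ A := ⟨x₀, hx₀, by simp⟩
  have hvolA : volume A = volume S := measure_vadd volume _ _
  have hF : ∀ s : ℝ, s ∈ Ioc (0:ℝ) 1 → ∀ u ∈ s • A,
      ENNReal.ofReal ((1-s)^(m+1)) * M ≤ volume (K ∩ ({x₀ + u} - L)) := by
    rintro s hs u ⟨w, hw, rfl⟩
    obtain ⟨y, hy, rfl⟩ := hw
    obtain ⟨k, hk, l, hl, rfl⟩ := hy
    have hb : k ∈ K ∩ ({(k + l : EuclideanSpace ℝ (Fin (m+1)))} - L) :=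
      ⟨hk, mem_single_sub.2 (by simpa using hl)⟩
    simp only [vadd_eq_add]
    rw [show -x₀ + (k + l) = (k + l) - x₀ from neg_add_eq_sub _ _]
    exact section_scale hKconv hLconv (le_of_lt hs.1) hs.2 hb
  have chain : M * (ENNReal.ofReal (((m+1).factorial * (m+1).factorial : ℝ)
      / (2*(m+1)).factorial) * volume A) ≤ volume K * volume L := by
    rw [← avg_integral m hAc hAconv hA0, ← hfub]
    calc M * ∫⁻ u in A, ∫⁻ s in Ioc (0:ℝ) 1,
          ENNReal.ofReal ((m+1) * (1-s)^m) * (s • A).indicator 1 u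
        = ∫⁻ u in A, M * ∫⁻ s in Ioc (0:ℝ) 1,
            ENNReal.ofReal ((m+1) * (1-s)^m) * (s • A).indicator 1 u :=
          (lintegral_const_mul' M _ hMtop).symm
      _ ≤ ∫⁻ u in A, volume (K ∩ ({x₀ + u} - L)) :=
          lintegral_mono fun u => pointwise_bound m hA0 hAconv
            (fun v => volume (K ∩ ({x₀ + v} - L))) M hMtop hF u
      _ ≤ ∫⁻ u, volume (K ∩ ({x₀ + u} - L)) := setLIntegral_le_lintegral _ _
      _ = ∫⁻ x, volume (K ∩ ({x} - L)) :=
          lintegral_add_left_eq_self (fun x => volume (K ∩ ({x} - L))) x₀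
  have hCc : (Nat.choose (2*(m+1)) (m+1) : ℝ≥0∞)
      * ENNReal.ofReal (((m+1).factorial * (m+1).factorial : ℝ) / (2*(m+1)).factorial) = 1 := by
    have hreal : (Nat.choose (2*(m+1)) (m+1) : ℝ)
        * (((m+1).factorial * (m+1).factorial : ℝ) / (2*(m+1)).factorial) = 1 := by
      have h := Nat.choose_mul_factorial_mul_factorial (show m+1 ≤ 2*(m+1) by omega)
      have h2 : 2*(m+1) - (m+1) = m+1 := by omega
      rw [h2] at h
      have hne : ((2*(m+1)).factorial : ℝ) ≠ 0 := by positivity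
      field_simp
      exact_mod_cast by rw [← h]; ring
    rw [← ENNReal.ofReal_natCast, ← ENNReal.ofReal_mul (by positivity), hreal,
      ENNReal.ofReal_one]
  calc M * volume S
      = M * (ENNReal.ofReal (((m+1).factorial * (m+1).factorial : ℝ)
          / (2*(m+1)).factorial) * volume A)
        * (Nat.choose (2*(m+1)) (m+1) : ℝ≥0∞) := by
        rw [hvolA]
        rw [show M * (ENNReal.ofReal (((m+1).factorial * (m+1).factorial : ℝ)
          / (2*(m+1)).factorial) * volume S) * (Nat.choose (2*(m+1)) (m+1) : ℝ≥0∞)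
          = M * volume S * ((Nat.choose (2*(m+1)) (m+1) : ℝ≥0∞)
            * ENNReal.ofReal (((m+1).factorial * (m+1).factorial : ℝ)
              / (2*(m+1)).factorial)) from by ring, hCc, mul_one]
    _ ≤ volume K * volume L * (Nat.choose (2*(m+1)) (m+1) : ℝ≥0∞) :=
        mul_le_mul_left chain _
    _ = (Nat.choose (2*(m+1)) (m+1) : ℝ≥0∞) * (volume K * volume L) := mul_comm _ _
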